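/- Let F be a class of functions from Z to {0,1} with Littlestone dimension d. Then for every Z-valued complete binary tree Z̄ of depth T, the size of the smallest 0-cover of F on Z̄ is at most (eT)^d. -/

import Mathlib

/-- A complete binary tree of depth `d` with nodes labeled by `Z`; equivalently, a
`Z`-valued tree assigning `z^{(t)}(ε) ∈ Z` to each level `t` and sign-prefix `ε`. -/
abbrev BTree (Z : Type*) (d : ℕ) := ∀ t : Fin d, (Fin t → Bool) → Z

def LShattered {Z : Type*} (F : Set (Z → Bool)) (d : ℕ) (tr : BTree Z d) : Prop :=
  ∀ ε : Fin d → Bool, ∃ f ∈ F, ∀ t : Fin d,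
    f (tr t fun i => ε ⟨i.1, i.isLt.trans t.isLt⟩) = ε t

noncomputable def Ldim {Z : Type*} (F : Set (Z → Bool)) : ℕ∞ :=
  sSup ((fun n : ℕ => (n : ℕ∞)) '' {n | ∃ tr : BTree Z n, LShattered F n tr})

section ZeroCoverAux

open Classical in
/-- The cover property. -/
def Cover {Z : Type*} {T : ℕ} (F : Set (Z → Bool)) (tree : BTree Z T)
    (V : Finset (BTree Bool T)) : Prop :=
  ∀ f ∈ F, ∀ ε : Fin T → Bool, ∃ v ∈ V, ∀ t : Fin T,
    v t (fun i => ε ⟨i.1, i.isLt.trans t.isLt⟩) =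
      f (tree t (fun i => ε ⟨i.1, i.isLt.trans t.isLt⟩))

/-- The root label of a nonempty tree. -/
def root {Z : Type*} {T : ℕ} (tree : BTree Z (T+1)) : Z :=
  tree ⟨0, Nat.succ_pos T⟩ (fun i => i.elim0)

/-- The subtree of a tree in direction `b`. -/
def sub {Z : Type*} {T : ℕ} (tree : BTree Z (T+1)) (b : Bool) : BTree Z T :=
  fun s η => tree ⟨s.1+1, Nat.succ_lt_succ s.isLt⟩
    (fun i => if h : (i : ℕ) = 0 then b
      else η ⟨i.1 - 1, by
        have hi : (i : ℕ) < s.1 + 1 := i.isLt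
        omega⟩)

/-- Combine a root value with two boolean subtrees. -/
def comb {T : ℕ} (c : Bool) (vL vR : BTree Bool T) : BTree Bool (T+1) :=
  fun t ε => if h : (t : ℕ) = 0 then c
    else (if ε ⟨0, Nat.pos_of_ne_zero h⟩ then vR else vL)
      ⟨t.1 - 1, by have := t.isLt; omega⟩
      (fun i => ε ⟨i.1 + 1, by
        have h1 : (i : ℕ) < t.1 - 1 := i.isLt
        have h2 := t.isLt
        omega⟩)

/-- Combine a root label with two `Z`-valued subtrees. -/
def combT {Z : Type*} {d : ℕ} (z : Z) (tr : Bool → BTree Z d) : BTree Z (d+1) :=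
  fun t ε => if h : (t : ℕ) = 0 then z
    else tr (ε ⟨0, Nat.pos_of_ne_zero h⟩)
      ⟨t.1 - 1, by have := t.isLt; omega⟩
      (fun i => ε ⟨i.1 + 1, by
        have h1 : (i : ℕ) < t.1 - 1 := i.isLt
        have h2 := t.isLt
        omega⟩)

lemma comb_succ {T : ℕ} (c : Bool) (vL vR : BTree Bool T) (k : ℕ) (ht : k+1 < T+1)
    (A : Fin (k+1) → Bool) :
    comb c vL vR ⟨k+1, ht⟩ A =
      (if A ⟨0, Nat.succ_pos k⟩ then vR else vL) ⟨k, Nat.lt_of_succ_lt_succ ht⟩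
        (fun i => A ⟨i.1+1, Nat.succ_lt_succ i.isLt⟩) := rfl

lemma tree_zero {Z : Type*} {T : ℕ} (tree : BTree Z (T+1)) (ht : (0:ℕ) < T+1)
    (A : Fin (0:ℕ) → Bool) : tree ⟨0, ht⟩ A = root tree :=
  congrArg (tree ⟨0, ht⟩) (Subsingleton.elim _ _)

lemma sub_eq {Z : Type*} {T : ℕ} (tree : BTree Z (T+1)) (b : Bool) (ε : Fin (T+1) → Bool)
    (hb : ε ⟨0, Nat.succ_pos T⟩ = b) (k : ℕ) (hk : k < T) (ht : k+1 < T+1) :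
    sub tree b ⟨k, hk⟩ (fun i : Fin k => ε ⟨i.1+1, Nat.succ_lt_succ (i.isLt.trans hk)⟩) =
      tree ⟨k+1, ht⟩ (fun i : Fin (k+1) => ε ⟨i.1, i.isLt.trans ht⟩) := by
  refine congrArg (tree ⟨k+1, ht⟩) (funext fun i => ?_)
  rcases i with ⟨_ | j, hi⟩
  · simpa using hb.symm
  · exact dif_neg (Nat.succ_ne_zero j)

lemma shatter_combT {Z : Type*} {d : ℕ} (F : Set (Z → Bool)) (z : Z)
    (tr : Bool → BTree Z d)
    (h : ∀ b, LShattered {f | f ∈ F ∧ f z = b} d (tr b)) :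
    LShattered F (d+1) (combT z tr) := by
  intro ε
  obtain ⟨f, ⟨hfF, hfz⟩, hf⟩ := h (ε ⟨0, Nat.succ_pos d⟩)
    (fun j => ε ⟨j.1+1, Nat.succ_lt_succ j.isLt⟩)
  refine ⟨f, hfF, ?_⟩
  rintro ⟨_ | k, ht⟩
  · exact hfz
  · exact hf ⟨k, Nat.lt_of_succ_lt_succ ht⟩

open Classical in
lemma comb_cover {Z : Type*} {T : ℕ} (tree : BTree Z (T+1)) (c : Bool)
    (G : Set (Z → Bool)) (hG : ∀ f ∈ G, f (root tree) = c)
    (VL VR : Finset (BTree Bool T))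
    (hL : Cover G (sub tree false) VL) (hR : Cover G (sub tree true) VR) :
    ∃ W : Finset (BTree Bool (T+1)), Cover G tree W ∧ W.card ≤ max VL.card VR.card := by
  rcases G.eq_empty_or_nonempty with hGe | ⟨f₀, hf₀⟩
  · exact ⟨∅, fun f hf => by simp [hGe] at hf, by simp⟩
  obtain ⟨vL₀, hvL₀, -⟩ := hL f₀ hf₀ (fun _ => false)
  obtain ⟨vR₀, hvR₀, -⟩ := hR f₀ hf₀ (fun _ => false)
  set m := max VL.card VR.card with hm
  refine ⟨(Finset.range m).image
      (fun i => comb c (VL.toList.getD i vL₀) (VR.toList.getD i vR₀)), ?_, ?_⟩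
  swap
  · exact Finset.card_image_le.trans (by simp)
  intro f hf ε
  cases hb : ε ⟨0, Nat.succ_pos T⟩ with
  | false =>
    obtain ⟨v, hv, hmatch⟩ := hL f hf (fun j => ε ⟨j.1+1, Nat.succ_lt_succ j.isLt⟩)
    have hidx : VL.toList.idxOf v < VL.toList.length :=
      List.idxOf_lt_length_iff.2 (Finset.mem_toList.2 hv)
    have hgd : VL.toList.getD (VL.toList.idxOf v) vL₀ = v := by
      rw [List.getD_eq_getElem _ _ hidx]
      exact List.getElem_idxOf hidx
    refine ⟨comb c v (VR.toList.getD (VL.toList.idxOf v) vR₀), ?_, ?_⟩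
    · refine Finset.mem_image.2 ⟨VL.toList.idxOf v, Finset.mem_range.2 ?_, by rw [hgd]⟩
      calc VL.toList.idxOf v < VL.toList.length := hidx
        _ = VL.card := Finset.length_toList _
        _ ≤ m := le_max_left _ _
    · rintro ⟨_ | k, ht⟩
      · exact ((hG f hf).symm.trans (congrArg f (tree_zero tree ht _).symm))
      · have hk : k < T := Nat.lt_of_succ_lt_succ ht
        have step : comb c v (VR.toList.getD (VL.toList.idxOf v) vR₀) ⟨k+1, ht⟩
            (fun i => ε ⟨i.1, i.isLt.trans ht⟩)
            = v ⟨k, hk⟩ (fun i => ε ⟨i.1+1, Nat.succ_lt_succ (i.isLt.trans hk)⟩) := by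
          rw [comb_succ]
          simp [show ε 0 = false from hb]
        exact step.trans ((hmatch ⟨k, hk⟩).trans
          (congrArg f (sub_eq tree false ε hb k hk ht)))
  | true =>
    obtain ⟨v, hv, hmatch⟩ := hR f hf (fun j => ε ⟨j.1+1, Nat.succ_lt_succ j.isLt⟩)
    have hidx : VR.toList.idxOf v < VR.toList.length :=
      List.idxOf_lt_length_iff.2 (Finset.mem_toList.2 hv)
    have hgd : VR.toList.getD (VR.toList.idxOf v) vR₀ = v := by
      rw [List.getD_eq_getElem _ _ hidx]
      exact List.getElem_idxOf hidx
    refine ⟨comb c (VL.toList.getD (VR.toList.idxOf v) vL₀) v, ?_, ?_⟩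
    · refine Finset.mem_image.2 ⟨VR.toList.idxOf v, Finset.mem_range.2 ?_, by rw [hgd]⟩
      calc VR.toList.idxOf v < VR.toList.length := hidx
        _ = VR.card := Finset.length_toList _
        _ ≤ m := le_max_right _ _
    · rintro ⟨_ | k, ht⟩
      · exact ((hG f hf).symm.trans (congrArg f (tree_zero tree ht _).symm))
      · have hk : k < T := Nat.lt_of_succ_lt_succ ht
        have step : comb c (VL.toList.getD (VR.toList.idxOf v) vL₀) v ⟨k+1, ht⟩
            (fun i => ε ⟨i.1, i.isLt.trans ht⟩)
            = v ⟨k, hk⟩ (fun i => ε ⟨i.1+1, Nat.succ_lt_succ (i.isLt.trans hk)⟩) := by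
          rw [comb_succ]
          simp [show ε 0 = true from hb]
        exact step.trans ((hmatch ⟨k, hk⟩).trans
          (congrArg f (sub_eq tree true ε hb k hk ht)))

lemma branch_cover {Z : Type*} {T : ℕ} (tree : BTree Z (T+1)) (c : Bool)
    (G : Set (Z → Bool)) (hGc : ∀ f ∈ G, f (root tree) = c) (n : ℕ)
    (hno : ¬ ∃ tr : BTree Z (n+1), LShattered G (n+1) tr)
    (IH : ∀ (F' : Set (Z → Bool)) (d' : ℕ) (tree' : BTree Z T),
      (¬ ∃ tr : BTree Z (d'+1), LShattered F' (d'+1) tr) →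
      ∃ V : Finset (BTree Bool T), Cover F' tree' V ∧ V.card ≤ (T+1)^d') :
    ∃ W : Finset (BTree Bool (T+1)), Cover G tree W ∧ W.card ≤ (T+1)^n := by
  obtain ⟨VL, hVL, hcL⟩ := IH G n (sub tree false) hno
  obtain ⟨VR, hVR, hcR⟩ := IH G n (sub tree true) hno
  obtain ⟨W, hW, hWc⟩ := comb_cover tree c G hGc VL VR hVL hVR
  exact ⟨W, hW, hWc.trans (max_le hcL hcR)⟩

lemma small_branch {Z : Type*} {T : ℕ} (tree : BTree Z (T+1)) (c : Bool)
    (G : Set (Z → Bool)) (hGc : ∀ f ∈ G, f (root tree) = c) (d : ℕ)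
    (hno : ¬ ∃ tr : BTree Z d, LShattered G d tr)
    (IH : ∀ (F' : Set (Z → Bool)) (d' : ℕ) (tree' : BTree Z T),
      (¬ ∃ tr : BTree Z (d'+1), LShattered F' (d'+1) tr) →
      ∃ V : Finset (BTree Bool T), Cover F' tree' V ∧ V.card ≤ (T+1)^d') :
    ∃ W : Finset (BTree Bool (T+1)), Cover G tree W ∧ W.card + (T+1)^d ≤ (T+2)^d := by
  cases d with
  | zero =>
    refine ⟨∅, ?_, by simp⟩
    intro f hf ε
    exact absurd ⟨fun t => t.elim0, fun _ => ⟨f, hf, fun t => t.elim0⟩⟩ hno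
  | succ d' =>
    obtain ⟨W, hW, hc⟩ := branch_cover tree c G hGc d' hno IH
    refine ⟨W, hW, ?_⟩
    calc W.card + (T+1)^(d'+1) ≤ (T+1)^d' + (T+1)^(d'+1) := Nat.add_le_add_right hc _
      _ = (T+2) * (T+1)^d' := by ring
      _ ≤ (T+2) * (T+2)^d' := Nat.mul_le_mul_left _ (Nat.pow_le_pow_left (by omega) d')
      _ = (T+2)^(d'+1) := by ring

open Classical in
lemma cover_exists {Z : Type*} : ∀ (T : ℕ) (F : Set (Z → Bool)) (d : ℕ) (tree : BTree Z T),
    (¬ ∃ tr : BTree Z (d+1), LShattered F (d+1) tr) →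
    ∃ V : Finset (BTree Bool T), Cover F tree V ∧ V.card ≤ (T+1)^d := by
  intro T
  induction T with
  | zero =>
    intro F d tree _
    refine ⟨{fun t => t.elim0}, ?_, by simp [Nat.one_le_iff_ne_zero, Nat.pow_pos]⟩
    intro f hf ε
    exact ⟨_, Finset.mem_singleton_self _, fun t => t.elim0⟩
  | succ T IH =>
    intro F d tree hno
    set z := root tree with hz
    have hmono : ∀ (c : Bool) (n : ℕ), (¬ ∃ tr : BTree Z (n+1), LShattered F (n+1) tr) →
        ¬ ∃ tr : BTree Z (n+1), LShattered {f | f ∈ F ∧ f z = c} (n+1) tr := by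
      rintro c n hn ⟨tr, htr⟩
      exact hn ⟨tr, fun ε => ((htr ε).imp (fun f hf => ⟨hf.1.1, hf.2⟩))⟩
    have hkey : ∀ tr0 tr1, LShattered {f | f ∈ F ∧ f z = false} d tr0 →
        LShattered {f | f ∈ F ∧ f z = true} d tr1 → False := by
      intro tr0 tr1 h0 h1
      refine hno ⟨combT z (fun b => bif b then tr1 else tr0), shatter_combT F z _ ?_⟩
      intro b
      cases b
      · exact h0
      · exact h1
    -- decide which branch is small
    by_cases hsh : ∃ tr0 : BTree Z d, LShattered {f | f ∈ F ∧ f z = false} d tr0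
    · have hnos : ¬ ∃ tr1 : BTree Z d, LShattered {f | f ∈ F ∧ f z = true} d tr1 := by
        rintro ⟨tr1, h1⟩
        obtain ⟨tr0, h0⟩ := hsh
        exact hkey tr0 tr1 h0 h1
      obtain ⟨W0, hW0, hW0c⟩ := branch_cover tree false {f | f ∈ F ∧ f z = false}
        (fun f hf => hf.2) d (hmono false d hno) IH
      obtain ⟨W1, hW1, hW1c⟩ := small_branch tree true {f | f ∈ F ∧ f z = true}
        (fun f hf => hf.2) d hnos IH
      refine ⟨W0 ∪ W1, ?_, ?_⟩
      · intro f hf ε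
        cases hfz : f z with
        | false =>
          obtain ⟨v, hv, hp⟩ := hW0 f ⟨hf, hfz⟩ ε
          exact ⟨v, Finset.mem_union_left _ hv, hp⟩
        | true =>
          obtain ⟨v, hv, hp⟩ := hW1 f ⟨hf, hfz⟩ ε
          exact ⟨v, Finset.mem_union_right _ hv, hp⟩
      · have := Finset.card_union_le W0 W1
        have h2 : (T+1+1)^d = (T+2)^d := by norm_num
        omega
    · obtain ⟨W0, hW0, hW0c⟩ := branch_cover tree true {f | f ∈ F ∧ f z = true}
        (fun f hf => hf.2) d (hmono true d hno) IH
      obtain ⟨W1, hW1, hW1c⟩ := small_branch tree false {f | f ∈ F ∧ f z = false}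
        (fun f hf => hf.2) d hsh IH
      refine ⟨W0 ∪ W1, ?_, ?_⟩
      · intro f hf ε
        cases hfz : f z with
        | false =>
          obtain ⟨v, hv, hp⟩ := hW1 f ⟨hf, hfz⟩ ε
          exact ⟨v, Finset.mem_union_right _ hv, hp⟩
        | true =>
          obtain ⟨v, hv, hp⟩ := hW0 f ⟨hf, hfz⟩ ε
          exact ⟨v, Finset.mem_union_left _ hv, hp⟩
      · have := Finset.card_union_le W0 W1
        have h2 : (T+1+1)^d = (T+2)^d := by norm_num
        omega

end ZeroCoverAux

/-- 0-cover bound: on any `Z`-valued tree of depth `T`, the class `F` admits a 0-cover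
by at most `(eT)^d` boolean trees, where `d = Ldim F`. -/
theorem zero_cover_bound {Z : Type*} (F : Set (Z → Bool)) (d : ℕ)
    (hd : Ldim F = (d : ℕ∞)) (T : ℕ) (hT : 1 ≤ T) (tree : BTree Z T) :
    ∃ V : Finset (BTree Bool T),
      (∀ f ∈ F, ∀ ε : Fin T → Bool, ∃ v ∈ V, ∀ t : Fin T,
        v t (fun i => ε ⟨i.1, i.isLt.trans t.isLt⟩) =
          f (tree t (fun i => ε ⟨i.1, i.isLt.trans t.isLt⟩))) ∧
      (V.card : ℝ) ≤ (Real.exp 1 * T) ^ d := by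
  have hno : ¬ ∃ tr : BTree Z (d+1), LShattered F (d+1) tr := by
    rintro ⟨tr, htr⟩
    have hle : ((d+1 : ℕ) : ℕ∞) ≤ Ldim F := le_sSup ⟨d+1, ⟨tr, htr⟩, rfl⟩
    rw [hd] at hle
    have : d + 1 ≤ d := Nat.cast_le.mp hle
    omega
  obtain ⟨V, hV, hVc⟩ := cover_exists T F d tree hno
  refine ⟨V, hV, ?_⟩
  calc (V.card : ℝ) ≤ ((T : ℝ) + 1)^d := by exact_mod_cast hVc
    _ ≤ (Real.exp 1 * T) ^ d := by
        apply pow_le_pow_left₀ (by positivity)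
        have hT1 : (1:ℝ) ≤ T := by exact_mod_cast hT
        have he : (2:ℝ) ≤ Real.exp 1 := by
          have := Real.exp_one_gt_d9
          norm_num at this ⊢
          linarith
        nlinarith
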